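/- Let B, C, D be n×n real matrices and x ∈ ℝ^{2n}, b ∈ ℝ^{2n}. Write x = (x₁, x₂) and b = (b₁, b₂) with x₁, x₂, b₁, b₂ ∈ ℝⁿ, and set z = x₁ + i·x₂ ∈ ℂⁿ, p = b₁ + i·b₂ ∈ ℂⁿ, M = (B + D - i(C - Cᵀ))/2, N = (B - D + i(C + Cᵀ))/2. Then the real system [[B, C], [Cᵀ, D]]x = b holds if and only if Mz + N·conj(z) = p. -/

import Mathlib

open Matrix

lemma stmt_8_key (n : ℕ) (B C D : Matrix (Fin n) (Fin n) ℝ)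
    (x₁ x₂ : Fin n → ℝ) :
    (((2 : ℂ)⁻¹) • (B.map Complex.ofReal + D.map Complex.ofReal -
        Complex.I • (C.map Complex.ofReal - Cᵀ.map Complex.ofReal))).mulVec
      (fun i => (x₁ i : ℂ) + Complex.I * (x₂ i : ℂ)) +
    (((2 : ℂ)⁻¹) • (B.map Complex.ofReal - D.map Complex.ofReal +
        Complex.I • (C.map Complex.ofReal + Cᵀ.map Complex.ofReal))).mulVec
      (star fun i => (x₁ i : ℂ) + Complex.I * (x₂ i : ℂ)) =
    fun i => (((B.mulVec x₁ + C.mulVec x₂) i : ℝ) : ℂ) +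
      Complex.I * (((Cᵀ.mulVec x₁ + D.mulVec x₂) i : ℝ) : ℂ) := by
  funext i
  simp only [Pi.add_apply, mulVec, dotProduct, Pi.star_apply, star_add, star_mul',
    Complex.star_def, Complex.conj_ofReal, Complex.conj_I, Matrix.smul_apply, Matrix.add_apply,
    Matrix.sub_apply, Matrix.map_apply, Matrix.transpose_apply, smul_eq_mul,
    Complex.ofReal_add, Finset.mul_sum]
  push_cast
  rw [mul_add, Finset.mul_sum, Finset.mul_sum]
  simp only [← Finset.sum_add_distrib]
  refine Finset.sum_congr rfl fun j _ => ?_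
  linear_combination (-(C i j : ℂ) * (x₂ j : ℂ)) * Complex.I_sq

theorem stmt_8 (n : ℕ) (B C D : Matrix (Fin n) (Fin n) ℝ)
    (x₁ x₂ b₁ b₂ : Fin n → ℝ)
    (z p : Fin n → ℂ)
    (hz : z = fun i => (x₁ i : ℂ) + Complex.I * (x₂ i : ℂ))
    (hp : p = fun i => (b₁ i : ℂ) + Complex.I * (b₂ i : ℂ))
    (M N : Matrix (Fin n) (Fin n) ℂ)
    (hM : M = ((2 : ℂ)⁻¹) •
      (B.map Complex.ofReal + D.map Complex.ofReal -
        Complex.I • (C.map Complex.ofReal - Cᵀ.map Complex.ofReal)))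
    (hN : N = ((2 : ℂ)⁻¹) •
      (B.map Complex.ofReal - D.map Complex.ofReal +
        Complex.I • (C.map Complex.ofReal + Cᵀ.map Complex.ofReal))) :
    (Matrix.fromBlocks B C Cᵀ D).mulVec (Sum.elim x₁ x₂) = Sum.elim b₁ b₂ ↔
    M.mulVec z + N.mulVec (star z) = p := by
  subst hz hp hM hN
  rw [stmt_8_key, Matrix.fromBlocks_mulVec]
  rw [funext_iff, funext_iff, Sum.forall]
  simp only [Sum.elim_comp_inl, Sum.elim_comp_inr, Sum.elim_inl, Sum.elim_inr,
    Pi.add_apply]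
  constructor
  · rintro ⟨h1, h2⟩ i
    rw [h1 i, h2 i]
  · intro h
    have h' : ∀ i, (B.mulVec x₁) i + (C.mulVec x₂) i = b₁ i ∧
        (Cᵀ.mulVec x₁) i + (D.mulVec x₂) i = b₂ i := fun i => by
      have := h i
      constructor
      · simpa using congrArg Complex.re this
      · simpa using congrArg Complex.im this
    exact ⟨fun i => (h' i).1, fun i => (h' i).2⟩
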